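/- For f ∈ [0,1] and θ ∈ ℝ, let Λ_{f,θ} be the single-qubit channel given by the Z-rotation followed by depolarizing noise of fidelity f: Λ_{f,θ}(ρ) = f · U ρ U† + (1 − f) · Tr(ρ) · I/2, where U = diag(e^{−iθ/2}, e^{iθ/2}). Then D(Λ_{f,θ}) = max(1, f·|cos θ| + f·|sin θ|), and D(Λ_{f,θ}†) equals the same value. -/

import Mathlib

open Matrix BigOperators Kronecker

noncomputable section

/-- The four single-qubit Pauli matrices `I, X, Y, Z`. -/
def pauli1 : Fin 4 → Matrix (Fin 2) (Fin 2) ℂ :=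
  ![(1 : Matrix (Fin 2) (Fin 2) ℂ),
    !![0, 1; 1, 0],
    !![0, -Complex.I; Complex.I, 0],
    !![1, 0; 0, -1]]

/-- Stabilizer norm of a single-qubit (2×2) matrix: `D(A) = (1/2) Σ_{σ ∈ P_1} |Tr(σ A)|`. -/
def stabNorm1 (A : Matrix (Fin 2) (Fin 2) ℂ) : ℝ :=
  (∑ i : Fin 4, ‖(pauli1 i * A).trace‖) / 2

/-- Channel stabilizer norm of a single-qubit channel: `D(Λ) = max_{σ ∈ P_1} D(Λ(σ))`. -/
def chanNorm1 (Λ : Matrix (Fin 2) (Fin 2) ℂ →ₗ[ℂ] Matrix (Fin 2) (Fin 2) ℂ) : ℝ :=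
  ⨆ i : Fin 4, stabNorm1 (Λ (pauli1 i))

/-- Pauli transfer matrix of a single-qubit channel: `(R_Λ)_{ij} = (1/2) Tr(σ_i Λ(σ_j))`. -/
def ptm1 (Λ : Matrix (Fin 2) (Fin 2) ℂ →ₗ[ℂ] Matrix (Fin 2) (Fin 2) ℂ) :
    Matrix (Fin 4) (Fin 4) ℂ :=
  Matrix.of fun i j => (pauli1 i * Λ (pauli1 j)).trace / 2

/-- The Z-rotation unitary `U = diag(e^{-iθ/2}, e^{iθ/2})`. -/
def rotZ (θ : ℝ) : Matrix (Fin 2) (Fin 2) ℂ :=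
  Matrix.diagonal ![Complex.exp (-((θ : ℂ) / 2) * Complex.I),
                    Complex.exp (((θ : ℂ) / 2) * Complex.I)]

lemma conj2' : (starRingEnd ℂ) 2 = 2 := by norm_num [Complex.ext_iff]

lemma expI' (x : ℝ) : Complex.exp ((x : ℂ) * Complex.I) =
    Complex.cos x + Complex.sin x * Complex.I := by exact Complex.exp_mul_I _

lemma expProd1 (θ : ℝ) :
    Complex.exp (-((θ:ℂ)/2 * Complex.I)) * Complex.exp (-((θ:ℂ)/2 * Complex.I))
    = Complex.cos θ - Complex.sin θ * Complex.I := by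
  rw [← Complex.exp_add,
    show (-((θ:ℂ)/2 * Complex.I) + -((θ:ℂ)/2 * Complex.I)) = ((-θ:ℝ):ℂ) * Complex.I by
      push_cast; ring, expI']
  push_cast [Complex.cos_neg, Complex.sin_neg]; ring

lemma expProd2 (θ : ℝ) :
    Complex.exp ((θ:ℂ)/2 * Complex.I) * Complex.exp ((θ:ℂ)/2 * Complex.I)
    = Complex.cos θ + Complex.sin θ * Complex.I := by
  rw [← Complex.exp_add,
    show (((θ:ℂ)/2 * Complex.I) + ((θ:ℂ)/2 * Complex.I)) = ((θ:ℝ):ℂ) * Complex.I by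
      push_cast; ring, expI']

lemma expProd3 (θ : ℝ) :
    Complex.exp (-((θ:ℂ)/2 * Complex.I)) * Complex.exp ((θ:ℂ)/2 * Complex.I) = 1 := by
  rw [← Complex.exp_add]; simp

lemma expProd4 (θ : ℝ) :
    Complex.exp ((θ:ℂ)/2 * Complex.I) * Complex.exp (-((θ:ℂ)/2 * Complex.I)) = 1 := by
  rw [← Complex.exp_add]; simp

lemma expA_I (θ : ℝ) :
    Complex.exp (-((θ:ℂ)/2 * Complex.I)) * Complex.I * Complex.exp (-((θ:ℂ)/2 * Complex.I))
    = (Complex.cos θ - Complex.sin θ * Complex.I) * Complex.I := by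
  rw [mul_right_comm, expProd1]

lemma expB_I (θ : ℝ) :
    Complex.exp ((θ:ℂ)/2 * Complex.I) * Complex.I * Complex.exp ((θ:ℂ)/2 * Complex.I)
    = (Complex.cos θ + Complex.sin θ * Complex.I) * Complex.I := by
  rw [mul_right_comm, expProd2]

/-- The table of traces `Tr(σ_i Λ(σ_j))`. -/
def Tv (f θ : ℝ) : Fin 4 → Fin 4 → ℂ :=
  ![![2, 0, 0, 0],
    ![0, ((2*(f*Real.cos θ) : ℝ) : ℂ), ((-(2*(f*Real.sin θ)) : ℝ) : ℂ), 0],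
    ![0, ((2*(f*Real.sin θ) : ℝ) : ℂ), ((2*(f*Real.cos θ) : ℝ) : ℂ), 0],
    ![0, 0, 0, ((2*f : ℝ) : ℂ)]]

lemma vecTail_const {α : Type*} {n : ℕ} (c : α) :
    Matrix.vecTail (fun _ : Fin (n+1) => c) = fun _ => c := rfl

lemma vecHead_const {α : Type*} {n : ℕ} (c : α) :
    Matrix.vecHead (fun _ : Fin (n+1) => c) = c := rfl

lemma absCos (θ : ℝ) : ‖Complex.cos θ‖ = |Real.cos θ| := by
  rw [← Complex.ofReal_cos, Complex.norm_real, Real.norm_eq_abs]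

lemma absSin (θ : ℝ) : ‖Complex.sin θ‖ = |Real.sin θ| := by
  rw [← Complex.ofReal_sin, Complex.norm_real, Real.norm_eq_abs]

lemma sup4 (g : Fin 4 → ℝ) (a : ℝ) (h0 : g 0 = 1) (h1 : g 1 = a) (h2 : g 2 = a)
    (h3 : g 3 ≤ 1) : ⨆ i, g i = max 1 a := by
  apply le_antisymm
  · apply ciSup_le; intro i
    fin_cases i
    · exact le_trans (le_of_eq h0) (le_max_left _ _)
    · exact le_trans (le_of_eq h1) (le_max_right _ _)
    · exact le_trans (le_of_eq h2) (le_max_right _ _)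
    · exact h3.trans (le_max_left _ _)
  · apply max_le
    · rw [← h0]; exact le_ciSup (Set.Finite.bddAbove (Set.finite_range g)) 0
    · rw [← h1]; exact le_ciSup (Set.Finite.bddAbove (Set.finite_range g)) 1

/-- For the depolarized Z-rotation channel
`Λ_{f,θ}(ρ) = f · U ρ U† + (1 − f) Tr(ρ) I/2` with `U = diag(e^{-iθ/2}, e^{iθ/2})`:
`D(Λ_{f,θ}) = max(1, f|cos θ| + f|sin θ|)`, and the same holds for `D(Λ_{f,θ}†)`. -/
theorem chanNorm_depolarized_rotation (f : ℝ) (hf : f ∈ Set.Icc (0 : ℝ) 1) (θ : ℝ)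
    (Λ Λd : Matrix (Fin 2) (Fin 2) ℂ →ₗ[ℂ] Matrix (Fin 2) (Fin 2) ℂ)
    (hΛ : ∀ ρ : Matrix (Fin 2) (Fin 2) ℂ,
      Λ ρ = (f : ℂ) • (rotZ θ * ρ * (rotZ θ)ᴴ) +
            ((1 - f : ℝ) : ℂ) • (ρ.trace • ((2 : ℂ)⁻¹ • (1 : Matrix (Fin 2) (Fin 2) ℂ))))
    (hadj : ∀ A B : Matrix (Fin 2) (Fin 2) ℂ,
      (A * Λ B).trace = (Λd A * B).trace) :
    chanNorm1 Λ = max 1 (f * |Real.cos θ| + f * |Real.sin θ|) ∧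
    chanNorm1 Λd = max 1 (f * |Real.cos θ| + f * |Real.sin θ|) := by
  obtain ⟨hf0, hf1⟩ := hf
  -- explicit images of the Paulis
  have LI : Λ (pauli1 0) = 1 := by
    rw [hΛ]
    ext i j
    fin_cases i <;> fin_cases j <;>
      simp [pauli1, rotZ, Matrix.mul_apply, Fin.sum_univ_two, Matrix.diagonal,
        Matrix.one_apply, Matrix.trace_fin_two, Matrix.trace_one,
        ← Complex.exp_conj, map_div₀, Complex.conj_ofReal, Complex.conj_I,
        conj2', map_neg, neg_div, neg_mul, expProd1 θ, expProd2 θ, expProd3 θ, expProd4 θ,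
        expA_I θ, expB_I θ]
    all_goals try ring_nf
    all_goals try simp only [Complex.I_sq]
    all_goals try left
    all_goals try ring
  have LX : Λ (pauli1 1) = !![0, (f:ℂ)*(Complex.cos θ - Complex.sin θ*Complex.I);
      (f:ℂ)*(Complex.cos θ + Complex.sin θ*Complex.I), 0] := by
    rw [hΛ]
    ext i j
    fin_cases i <;> fin_cases j <;>
      simp [pauli1, rotZ, Matrix.mul_apply, Fin.sum_univ_two, Matrix.diagonal,
        Matrix.one_apply, Matrix.trace_fin_two, Matrix.trace_one,
        ← Complex.exp_conj, map_div₀, Complex.conj_ofReal, Complex.conj_I,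
        conj2', map_neg, neg_div, neg_mul, expProd1 θ, expProd2 θ, expProd3 θ, expProd4 θ,
        expA_I θ, expB_I θ]
    all_goals try ring_nf
    all_goals try simp only [Complex.I_sq]
    all_goals try left
    all_goals try ring
  have LY : Λ (pauli1 2) = !![0, (f:ℂ)*(-Complex.sin θ - Complex.cos θ*Complex.I);
      (f:ℂ)*(Complex.cos θ*Complex.I - Complex.sin θ), 0] := by
    rw [hΛ]
    ext i j
    fin_cases i <;> fin_cases j <;>
      simp [pauli1, rotZ, Matrix.mul_apply, Fin.sum_univ_two, Matrix.diagonal,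
        Matrix.one_apply, Matrix.trace_fin_two, Matrix.trace_one,
        ← Complex.exp_conj, map_div₀, Complex.conj_ofReal, Complex.conj_I,
        conj2', map_neg, neg_div, neg_mul, expProd1 θ, expProd2 θ, expProd3 θ, expProd4 θ,
        expA_I θ, expB_I θ]
    all_goals try ring_nf
    all_goals try simp only [Complex.I_sq]
    all_goals try left
    all_goals try ring
  have LZ : Λ (pauli1 3) = !![(f:ℂ), 0; 0, -(f:ℂ)] := by
    rw [hΛ]
    ext i j
    fin_cases i <;> fin_cases j <;>
      simp [pauli1, rotZ, Matrix.mul_apply, Fin.sum_univ_two, Matrix.diagonal,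
        Matrix.one_apply, Matrix.trace_fin_two, Matrix.trace_one,
        ← Complex.exp_conj, map_div₀, Complex.conj_ofReal, Complex.conj_I,
        conj2', map_neg, neg_div, neg_mul, expProd1 θ, expProd2 θ, expProd3 θ, expProd4 θ,
        expA_I θ, expB_I θ]
    all_goals try ring_nf
    all_goals try simp only [Complex.I_sq]
    all_goals try left
    all_goals try ring
  -- the trace table
  have col0 : ∀ i : Fin 4, (pauli1 i * Λ (pauli1 0)).trace = Tv f θ i 0 := by
    intro i
    rw [LI]
    fin_cases i <;>
      simp [pauli1, Tv, Matrix.trace_fin_two, Matrix.mul_apply, Fin.sum_univ_two,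
        Matrix.one_apply, Matrix.vecHead, Matrix.vecTail]
  have col1 : ∀ i : Fin 4, (pauli1 i * Λ (pauli1 1)).trace = Tv f θ i 1 := by
    intro i
    rw [LX]
    fin_cases i <;>
      simp [pauli1, Tv, Matrix.trace_fin_two, Matrix.mul_apply, Fin.sum_univ_two,
        Matrix.one_apply, Matrix.vecHead, Matrix.vecTail]
    all_goals try push_cast
    all_goals try ring_nf
    all_goals try simp only [Complex.I_sq]
    all_goals try ring
  have col2 : ∀ i : Fin 4, (pauli1 i * Λ (pauli1 2)).trace = Tv f θ i 2 := by
    intro i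
    rw [LY]
    fin_cases i <;>
      simp [pauli1, Tv, Matrix.trace_fin_two, Matrix.mul_apply, Fin.sum_univ_two,
        Matrix.one_apply, Matrix.vecHead, Matrix.vecTail]
    all_goals try push_cast
    all_goals try ring_nf
    all_goals try simp only [Complex.I_sq]
    all_goals try ring
  have col3 : ∀ i : Fin 4, (pauli1 i * Λ (pauli1 3)).trace = Tv f θ i 3 := by
    intro i
    rw [LZ]
    fin_cases i <;>
      simp [pauli1, Tv, Matrix.trace_fin_two, Matrix.mul_apply, Fin.sum_univ_two,
        Matrix.one_apply, Matrix.vecHead, Matrix.vecTail]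
    all_goals try push_cast
    all_goals try ring_nf
    all_goals try simp only [Complex.I_sq]
    all_goals try ring
  have hT : ∀ i j : Fin 4, (pauli1 i * Λ (pauli1 j)).trace = Tv f θ i j := by
    intro i j
    fin_cases j
    · exact col0 i
    · exact col1 i
    · exact col2 i
    · exact col3 i
  have hD : ∀ i j : Fin 4, (pauli1 j * Λd (pauli1 i)).trace = Tv f θ i j := by
    intro i j
    rw [Matrix.trace_mul_comm, ← hadj, hT]
  -- stabilizer norms from the table
  have sΛ : ∀ j : Fin 4, stabNorm1 (Λ (pauli1 j))
      = (∑ i : Fin 4, ‖Tv f θ i j‖) / 2 := by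
    intro j; unfold stabNorm1; congr 1
    exact Finset.sum_congr rfl fun i _ => by rw [hT]
  have sΛd : ∀ i : Fin 4, stabNorm1 (Λd (pauli1 i))
      = (∑ j : Fin 4, ‖Tv f θ i j‖) / 2 := by
    intro i; unfold stabNorm1; congr 1
    exact Finset.sum_congr rfl fun j _ => by rw [hD]
  have habs : ∀ x : ℝ, ‖((2*(f*x) : ℝ) : ℂ)‖ = 2 * (f * |x|) := by
    intro x
    rw [Complex.norm_real, Real.norm_eq_abs, abs_mul, abs_mul, abs_of_nonneg hf0]
    norm_num
  have habsneg : ‖((-(2*(f*Real.sin θ)) : ℝ) : ℂ)‖ = 2 * (f * |Real.sin θ|) := by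
    rw [show ((-(2*(f*Real.sin θ)) : ℝ) : ℂ) = -((2*(f*Real.sin θ) : ℝ) : ℂ) by push_cast; ring,
      norm_neg, habs]
  have habsf : ‖((2*f : ℝ) : ℂ)‖ = 2 * f := by
    rw [Complex.norm_real, Real.norm_eq_abs, abs_of_nonneg (by linarith)]
  have v0 : (∑ i : Fin 4, ‖Tv f θ i 0‖) / 2 = 1 := by
    simp [Tv, Fin.sum_univ_four, vecTail_const, vecHead_const]
  have v1 : (∑ i : Fin 4, ‖Tv f θ i 1‖) / 2
      = f * |Real.cos θ| + f * |Real.sin θ| := by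
    simp [Tv, Fin.sum_univ_four, abs_mul, abs_of_nonneg hf0, absCos, absSin,
      vecTail_const, vecHead_const]
    ring
  have v2 : (∑ i : Fin 4, ‖Tv f θ i 2‖) / 2
      = f * |Real.cos θ| + f * |Real.sin θ| := by
    simp [Tv, Fin.sum_univ_four, abs_mul, abs_of_nonneg hf0, absCos, absSin,
      vecTail_const, vecHead_const]
    ring
  have v3 : (∑ i : Fin 4, ‖Tv f θ i 3‖) / 2 ≤ 1 := by
    simp [Tv, Fin.sum_univ_four, abs_of_nonneg hf0, vecTail_const, vecHead_const]
    linarith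
  have hrow : ∀ j : Fin 4, (∑ i : Fin 4, ‖Tv f θ i j‖) / 2
      = (∑ j' : Fin 4, ‖Tv f θ j j'‖) / 2 := by
    intro j; fin_cases j <;>
      simp [Tv, Fin.sum_univ_four, abs_mul, abs_of_nonneg hf0, absCos, absSin,
        vecTail_const, vecHead_const] <;>
      try ring
  constructor
  · unfold chanNorm1
    exact sup4 _ _ (by rw [sΛ 0, v0]) (by rw [sΛ 1, v1]) (by rw [sΛ 2, v2])
      (by rw [sΛ 3]; exact v3)
  · unfold chanNorm1
    exact sup4 _ _ (by rw [sΛd 0, ← hrow 0, v0]) (by rw [sΛd 1, ← hrow 1, v1])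
      (by rw [sΛd 2, ← hrow 2, v2]) (by rw [sΛd 3, ← hrow 3]; exact v3)
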